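/- Let H be a triangle-free simple graph, let k ≥ 2, and let C be a cycle of odd length 2k+1 in H such that H contains no odd cycle of length shorter than 2k+1. Then every vertex of H that does not lie on C is adjacent to at most 2 vertices of C. -/

import Mathlib

open SimpleGraph

private lemma getVert_injOn_aux {V : Type*} {G : SimpleGraph V} {a b : V} {p : G.Walk a b}
    (hp : p.IsPath) : ∀ {i j : ℕ}, i ≤ p.length → j ≤ p.length →
      p.getVert i = p.getVert j → i = j := by
  induction p with
  | nil => intro i j hi hj _; simp at hi hj; omega
  | cons hadj q ih =>
    rw [Walk.cons_isPath_iff] at hp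
    intro i j hi hj h
    match i, j with
    | 0, 0 => rfl
    | 0, j + 1 =>
      exfalso
      apply hp.2
      rw [Walk.getVert_zero, Walk.getVert_cons_succ] at h
      exact Walk.mem_support_iff_exists_getVert.mpr ⟨j, h.symm, by simpa using hj⟩
    | i + 1, 0 =>
      exfalso
      apply hp.2
      rw [Walk.getVert_zero, Walk.getVert_cons_succ] at h
      exact Walk.mem_support_iff_exists_getVert.mpr ⟨i, h, by simpa using hi⟩
    | i + 1, j + 1 =>
      rw [Walk.getVert_cons_succ, Walk.getVert_cons_succ] at h
      have := ih hp.1 (by simpa using hi) (by simpa using hj) h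
      omega

private lemma mem_support_tail_iff_closed {V : Type*} {G : SimpleGraph V} {s : V}
    {w : G.Walk s s} (hw : ¬w.Nil) {a : V} : a ∈ w.support.tail ↔ a ∈ w.support := by
  constructor
  · intro h
    rw [Walk.support_eq_cons w]
    exact List.mem_cons_of_mem _ h
  · intro h
    rw [Walk.support_eq_cons w] at h
    rcases List.mem_cons.mp h with rfl | h
    · rw [← Walk.support_tail_of_not_nil w hw]
      exact Walk.end_mem_support _
    · exact h

private lemma cycle_split_isPath {V : Type*} {G : SimpleGraph V} [DecidableEq V] {x y : V}
    {D : G.Walk x x} (hD : D.IsCycle) (hy : y ∈ D.support) (hyx : y ≠ x) :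
    (D.takeUntil y hy).IsPath ∧ (D.dropUntil y hy).IsPath := by
  have hspec := D.take_spec hy
  set p := D.takeUntil y hy with hpdef
  set q := D.dropUntil y hy with hqdef
  have hEe : (p.edges ++ q.edges).Nodup := by
    rw [← Walk.edges_append, hspec]
    exact hD.isCircuit.isTrail.edges_nodup
  rw [List.nodup_append] at hEe
  have ht : (p.support.tail ++ q.support.tail).Nodup := by
    have : p.support.tail ++ q.support.tail = D.support.tail := by
      rw [← hspec, Walk.support_append, Walk.support_eq_cons p, List.cons_append]
      rfl
    rw [this]
    exact hD.support_nodup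
  rw [List.nodup_append] at ht
  obtain ⟨hpn, hqn, hdisj⟩ := ht
  have hyp : y ∈ p.support.tail := by
    have h := Walk.end_mem_support p
    rw [Walk.support_eq_cons p] at h
    rcases List.mem_cons.mp h with h | h
    · exact absurd h hyx
    · exact h
  have hxq : x ∈ q.support.tail := by
    have h := Walk.end_mem_support q
    rw [Walk.support_eq_cons q] at h
    rcases List.mem_cons.mp h with h | h
    · exact absurd h.symm hyx
    · exact h
  constructor
  · refine ⟨⟨hEe.1⟩, ?_⟩
    rw [Walk.support_eq_cons p]
    exact List.nodup_cons.mpr ⟨fun hx' => hdisj x hx' x hxq rfl, hpn⟩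
  · refine ⟨⟨hEe.2.1⟩, ?_⟩
    rw [Walk.support_eq_cons q]
    exact List.nodup_cons.mpr ⟨fun hy' => hdisj y hyp y hy' rfl, hqn⟩

private lemma closed_bound {V : Type*} {G : SimpleGraph V} {k : ℕ} {u : V}
    (hshort : ∀ (w : V) (c' : G.Walk w w), c'.IsCycle → Odd c'.length → 2 * k + 1 ≤ c'.length)
    {a b : V} (P : G.Walk a b) (hP : P.IsPath) (huP : u ∉ P.support)
    (ha : G.Adj u a) (hb : G.Adj u b) (hab : a ≠ b) (hodd : Odd P.length) :
    2 * k + 1 ≤ P.length + 2 := by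
  have hQ : (Walk.cons hb P.reverse).IsPath := by
    rw [Walk.cons_isPath_iff]
    refine ⟨hP.reverse, ?_⟩
    rw [Walk.support_reverse, List.mem_reverse]
    exact huP
  set pQ : G.Walk a u := (Walk.cons hb P.reverse).reverse with hpQ
  have hcyc : (Walk.cons ha pQ).IsCycle := by
    rw [Walk.cons_isCycle_iff]
    refine ⟨hQ.reverse, ?_⟩
    intro hmem
    rw [hpQ, Walk.edges_reverse, List.mem_reverse, Walk.edges_cons] at hmem
    rcases List.mem_cons.mp hmem with h | h
    · rw [Sym2.eq_iff] at h
      rcases h with ⟨-, h2⟩ | ⟨-, h2⟩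
      · exact hab h2
      · exact ha.ne h2.symm
    · rw [Walk.edges_reverse, List.mem_reverse] at h
      exact huP (Walk.fst_mem_support_of_mem_edges P h)
  have hlenW : (Walk.cons ha pQ).length = P.length + 2 := by
    simp [hpQ]
  have hW := hshort u _ hcyc (by rw [hlenW]; obtain ⟨m, hm⟩ := hodd; exact ⟨m + 1, by omega⟩)
  rwa [hlenW] at hW

private lemma getVert_takeUntil_length {V : Type*} {G : SimpleGraph V} [DecidableEq V]
    {x w y : V} (D : G.Walk x w) (hy : y ∈ D.support) :
    D.getVert ((D.takeUntil y hy).length) = y := by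
  have h : ((D.takeUntil y hy).append (D.dropUntil y hy)).getVert
      ((D.takeUntil y hy).length) = y := by
    rw [Walk.getVert_append]
    simp
  rwa [D.take_spec hy] at h

private lemma arc_length_eq {V : Type*} {G : SimpleGraph V} [DecidableEq V] {k : ℕ} {u x y : V}
    (hk : 2 ≤ k)
    (hshort : ∀ (w : V) (c' : G.Walk w w), c'.IsCycle → Odd c'.length → 2 * k + 1 ≤ c'.length)
    {D : G.Walk x x} (hD : D.IsCycle) (hDlen : D.length = 2 * k + 1)
    (huD : u ∉ D.support) (hy : y ∈ D.support) (hyx : y ≠ x)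
    (hux : G.Adj u x) (huy : G.Adj u y) :
    (D.takeUntil y hy).length = 2 ∨ (D.takeUntil y hy).length = 2 * k - 1 := by
  obtain ⟨hpP, hqP⟩ := cycle_split_isPath hD hy hyx
  have hsum : (D.takeUntil y hy).length + (D.dropUntil y hy).length = 2 * k + 1 := by
    rw [← Walk.length_append, D.take_spec hy, hDlen]
  set p := D.takeUntil y hy with hpdef
  set q := D.dropUntil y hy with hqdef
  have hp1 : 1 ≤ p.length := by
    rcases Nat.eq_zero_or_pos p.length with h | h
    · exact absurd (Walk.eq_of_length_eq_zero h).symm hyx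
    · exact h
  have hq1 : 1 ≤ q.length := by
    rcases Nat.eq_zero_or_pos q.length with h | h
    · exact absurd (Walk.eq_of_length_eq_zero h) hyx
    · exact h
  have huP : u ∉ p.support := fun h => huD (Walk.support_takeUntil_subset D hy h)
  have huQ : u ∉ q.support := fun h => huD (Walk.support_dropUntil_subset D hy h)
  rcases Nat.even_or_odd p.length with hev | hodd
  · obtain ⟨m, hm⟩ := hev
    have hqodd : Odd q.length := ⟨k - m, by omega⟩
    have := closed_bound hshort q hqP huQ huy hux hyx hqodd
    left; omega
  · have := closed_bound hshort p hpP huP hux huy (Ne.symm hyx) hodd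
    obtain ⟨m, hm⟩ := hodd
    right; omega

private lemma no_third {V : Type*} {G : SimpleGraph V} [DecidableEq V] {k : ℕ} {u x y z : V}
    (hk : 2 ≤ k)
    (hshort : ∀ (w : V) (c' : G.Walk w w), c'.IsCycle → Odd c'.length → 2 * k + 1 ≤ c'.length)
    {D : G.Walk x x} (hD : D.IsCycle) (hDlen : D.length = 2 * k + 1)
    (huD : u ∉ D.support) (hy : y ∈ D.support) (hz : z ∈ D.support)
    (hyx : y ≠ x) (hzx : z ≠ x) (hyz : y ≠ z)
    (huy : G.Adj u y) (huz : G.Adj u z)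
    (hty : (D.takeUntil y hy).length = 2) (htz : (D.takeUntil z hz).length = 2 * k - 1) :
    False := by
  obtain ⟨hPz, -⟩ := cycle_split_isPath hD hz hzx
  set P := D.takeUntil z hz with hPdef
  have hPlen : P.length = 2 * k - 1 := htz
  have hgv2D : D.getVert 2 = y := by
    have h := getVert_takeUntil_length D hy
    rwa [hty] at h
  have hgv2P : P.getVert 2 = y := by
    have h2 : 2 < P.length := by omega
    have hh : D.getVert 2 = P.getVert 2 := by
      conv_lhs => rw [← D.take_spec hz]
      rw [Walk.getVert_append, if_pos h2]
    rw [← hh]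
    exact hgv2D
  have hyP : y ∈ P.support := Walk.mem_support_iff_exists_getVert.mpr ⟨2, hgv2P, by omega⟩
  have hsum2 : (P.takeUntil y hyP).length + (P.dropUntil y hyP).length = P.length := by
    rw [← Walk.length_append, P.take_spec hyP]
  have hgvs : P.getVert ((P.takeUntil y hyP).length) = y := getVert_takeUntil_length P hyP
  have hs2 : (P.takeUntil y hyP).length = 2 :=
    getVert_injOn_aux hPz (Walk.length_takeUntil_le P hyP) (by omega)
      (hgvs.trans hgv2P.symm)
  set R := P.dropUntil y hyP with hRdef
  have hR : R.IsPath := hPz.dropUntil hyP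
  have hRlen : R.length = 2 * k - 3 := by omega
  have hRodd : Odd R.length := ⟨k - 2, by omega⟩
  have huR : u ∉ R.support := fun h =>
    huD (Walk.support_takeUntil_subset D hz (Walk.support_dropUntil_subset P hyP h))
  have := closed_bound hshort R hR huR huy huz hyz hRodd
  omega

/-- If `H` is triangle-free, `k ≥ 2`, and `C` is a shortest odd cycle of `H`, of length `2k+1`,
then every vertex of `H` not on `C` is adjacent to at most `2` vertices of `C`. -/
theorem shortest_odd_cycle_few_neighbors {V : Type*} [Fintype V] [DecidableEq V]
    (H : SimpleGraph V) [DecidableRel H.Adj] (hH : H.CliqueFree 3)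
    (k : ℕ) (hk : 2 ≤ k) (v : V) (c : H.Walk v v)
    (hc : c.IsCycle) (hlen : c.length = 2 * k + 1)
    (hshort : ∀ (w : V) (c' : H.Walk w w), c'.IsCycle → Odd c'.length →
      2 * k + 1 ≤ c'.length)
    (u : V) (hu : u ∉ c.support) :
    (c.support.toFinset.filter (fun x => H.Adj u x)).card ≤ 2 := by
  by_contra hcard
  push_neg at hcard
  rw [Finset.two_lt_card] at hcard
  obtain ⟨x, hxmem, y, hymem, z, hzmem, hxy, hxz, hyz⟩ := hcard
  simp only [Finset.mem_filter, List.mem_toFinset] at hxmem hymem hzmem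
  obtain ⟨hxc, hux⟩ := hxmem
  obtain ⟨hyc, huy⟩ := hymem
  obtain ⟨hzc, huz⟩ := hzmem
  set D := c.rotate x hxc with hDdef
  have hD : D.IsCycle := hc.rotate hxc
  have hDlen : D.length = 2 * k + 1 := by
    rw [← hlen, ← Walk.length_darts, ← Walk.length_darts, (Walk.rotate_darts c x hxc).perm.length_eq]
  have hmem : ∀ a, a ∈ D.support ↔ a ∈ c.support := by
    intro a
    rw [← mem_support_tail_iff_closed hD.not_nil, ← mem_support_tail_iff_closed hc.not_nil]
    exact (Walk.support_rotate c x hxc).perm.mem_iff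
  have huD : u ∉ D.support := fun h => hu ((hmem u).mp h)
  have hyD : y ∈ D.support := (hmem y).mpr hyc
  have hzD : z ∈ D.support := (hmem z).mpr hzc
  have hty := arc_length_eq hk hshort hD hDlen huD hyD (Ne.symm hxy) hux huy
  have htz := arc_length_eq hk hshort hD hDlen huD hzD (Ne.symm hxz) hux huz
  have hne : (D.takeUntil y hyD).length ≠ (D.takeUntil z hzD).length := by
    intro h
    apply hyz
    have h1 := getVert_takeUntil_length D hyD
    have h2 := getVert_takeUntil_length D hzD
    rw [h] at h1
    exact h1.symm.trans h2
  rcases hty with h1 | h1 <;> rcases htz with h2 | h2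
  · exact absurd (h1.trans h2.symm) hne
  · exact no_third hk hshort hD hDlen huD hyD hzD (Ne.symm hxy) (Ne.symm hxz) hyz huy huz h1 h2
  · exact no_third hk hshort hD hDlen huD hzD hyD (Ne.symm hxz) (Ne.symm hxy) (Ne.symm hyz)
      huz huy h2 h1
  · exact absurd (h1.trans h2.symm) hne
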